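/- The three-valued immediate consequence operator Ψ_D, which maps a three-valued interpretation 𝓘 to the three-valued interpretation assigning to each shape name s with defining rule s ← φ the three-valued evaluation of φ in 𝓘, is a consistent approximator of the two-valued operator T_D. -/

import Mathlib

/-- The three truth values: false, unknown, true. -/
inductive TV where
  | f | u | t
deriving DecidableEq

/-- Rank of a truth value in the truth order `f ≤ u ≤ t`. -/
def TV.rank : TV → ℕ
  | .f => 0
  | .u => 1
  | .t => 2

/-- Kleene negation. -/
def TV.neg : TV → TV
  | .f => .t
  | .u => .u
  | .t => .f

/-- Kleene conjunction (minimum in the truth order). -/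
def TV.conj (a b : TV) : TV := if a.rank ≤ b.rank then a else b

/-- The precision order on truth values: `u` is least precise, `t` and `f`
are maximally precise. -/
def TV.pprec (a b : TV) : Prop := a = TV.u ∨ a = b

/-- Path expressions over property names `P`. -/
inductive PathE (P : Type*) where
  | prop (p : P)
  | inv (E : PathE P)
  | union (E₁ E₂ : PathE P)
  | comp (E₁ E₂ : PathE P)
  | star (E : PathE P)
  | opt (E : PathE P)

/-- Shapes over node names `N`, property names `P`, and shape names `S`. -/
inductive Shape (N P S : Type*) where
  | top
  | name (s : S)
  | singleton (c : N)
  | and (φ ψ : Shape N P S)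
  | neg (φ : Shape N P S)
  | geq (n : ℕ) (E : PathE P) (φ : Shape N P S)
  | eq (E₁ E₂ : PathE P)
  | disj (E₁ E₂ : PathE P)
  | closed (Q : Set P)

variable {N P S Δ : Type*}

/-- Semantics of a path expression in the fixed graph-interpretation given by
the property interpretation `pI`. -/
def evalPath (pI : P → Δ → Δ → Prop) : PathE P → Δ → Δ → Prop
  | .prop p => pI p
  | .inv E => fun a b => evalPath pI E b a
  | .union E₁ E₂ => fun a b => evalPath pI E₁ a b ∨ evalPath pI E₂ a b
  | .comp E₁ E₂ => fun a b => ∃ c, evalPath pI E₁ a c ∧ evalPath pI E₂ c b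
  | .star E => Relation.ReflTransGen (evalPath pI E)
  | .opt E => fun a b => evalPath pI E a b ∨ a = b

/-- A set has at least `n` elements. -/
def AtLeast (n : ℕ) (X : Set Δ) : Prop :=
  ∃ g : Fin n → Δ, Function.Injective g ∧ ∀ i, g i ∈ X

open Classical in
/-- Three-valued (Kleene) evaluation of a shape in a three-valued
interpretation `I : S → Δ → TV` of the shape names, over the fixed
graph-interpretation given by `cI` and `pI`. -/
noncomputable def eval3 (cI : N → Δ) (pI : P → Δ → Δ → Prop) :
    Shape N P S → (S → Δ → TV) → Δ → TV
  | .top, _, _ => TV.t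
  | .name s, I, a => I s a
  | .singleton c, _, a => if a = cI c then TV.t else TV.f
  | .and φ ψ, I, a => (eval3 cI pI φ I a).conj (eval3 cI pI ψ I a)
  | .neg φ, I, a => (eval3 cI pI φ I a).neg
  | .geq n E φ, I, a =>
      if AtLeast n {b | evalPath pI E a b ∧ eval3 cI pI φ I b = TV.t} then TV.t
      else if AtLeast n {b | evalPath pI E a b ∧ eval3 cI pI φ I b ≠ TV.f} then TV.u
      else TV.f
  | .eq E₁ E₂, _, a =>
      if ∀ b, evalPath pI E₁ a b ↔ evalPath pI E₂ a b then TV.t else TV.f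
  | .disj E₁ E₂, _, a =>
      if ∀ b, ¬(evalPath pI E₁ a b ∧ evalPath pI E₂ a b) then TV.t else TV.f
  | .closed Q, _, a =>
      if ∀ p ∉ Q, ∀ b, ¬ pI p a b then TV.t else TV.f

/-- Two-valued evaluation of a shape in an interpretation `σ : S → Set Δ` of
the shape names, over the fixed graph-interpretation given by `cI` and `pI`. -/
def eval2 (cI : N → Δ) (pI : P → Δ → Δ → Prop) :
    Shape N P S → (S → Set Δ) → Set Δ
  | .top, _ => Set.univ
  | .name s, σ => σ s
  | .singleton c, _ => {cI c}
  | .and φ ψ, σ => eval2 cI pI φ σ ∩ eval2 cI pI ψ σ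
  | .neg φ, σ => (eval2 cI pI φ σ)ᶜ
  | .geq n E φ, σ => {a | AtLeast n {b | evalPath pI E a b ∧ b ∈ eval2 cI pI φ σ}}
  | .eq E₁ E₂, _ => {a | ∀ b, evalPath pI E₁ a b ↔ evalPath pI E₂ a b}
  | .disj E₁ E₂, _ => {a | ∀ b, ¬(evalPath pI E₁ a b ∧ evalPath pI E₂ a b)}
  | .closed Q, _ => {a | ∀ p ∉ Q, ∀ b, ¬ pI p a b}

open Classical in
/-- The exact three-valued interpretation corresponding to a two-valued
interpretation `σ`. -/
noncomputable def exactTV (σ : S → Set Δ) : S → Δ → TV :=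
  fun s a => if a ∈ σ s then TV.t else TV.f

/-- The two-valued immediate consequence operator `T_D` of a rule set `D`. -/
def TD (cI : N → Δ) (pI : P → Δ → Δ → Prop) (D : S → Shape N P S) :
    (S → Set Δ) → S → Set Δ :=
  fun σ s => eval2 cI pI (D s) σ

/-- The three-valued immediate consequence operator `Ψ_D` of a rule set `D`. -/
noncomputable def PsiD (cI : N → Δ) (pI : P → Δ → Δ → Prop) (D : S → Shape N P S) :
    (S → Δ → TV) → S → Δ → TV :=
  fun I s => eval3 cI pI (D s) I

lemma pprec_refl (a : TV) : a.pprec a := Or.inr rfl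

lemma conj_pprec {a a' b b' : TV} (h1 : a.pprec a') (h2 : b.pprec b') :
    (a.conj b).pprec (a'.conj b') := by
  cases a <;> cases a' <;> cases b <;> cases b' <;>
    simp_all [TV.conj, TV.pprec, TV.rank]

lemma neg_pprec {a a' : TV} (h : a.pprec a') : a.neg.pprec a'.neg := by
  cases a <;> cases a' <;> simp_all [TV.neg, TV.pprec]

lemma atLeast_mono {n : ℕ} {X Y : Set Δ} (h : X ⊆ Y) :
    AtLeast n X → AtLeast n Y :=
  fun ⟨g, hi, hm⟩ => ⟨g, hi, fun i => h (hm i)⟩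

lemma eval3_mono (cI : N → Δ) (pI : P → Δ → Δ → Prop) (φ : Shape N P S)
    (I I' : S → Δ → TV) (h : ∀ s a, (I s a).pprec (I' s a)) :
    ∀ a, (eval3 cI pI φ I a).pprec (eval3 cI pI φ I' a) := by
  induction φ with
  | top => intro a; exact pprec_refl _
  | name s => intro a; exact h s a
  | singleton c => intro a; exact pprec_refl _
  | and φ ψ ihφ ihψ => intro a; exact conj_pprec (ihφ a) (ihψ a)
  | neg φ ih => intro a; exact neg_pprec (ih a)
  | geq n E φ ih =>
    intro a
    simp only [eval3]
    by_cases h1 : AtLeast n {b | evalPath pI E a b ∧ eval3 cI pI φ I b = TV.t}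
    · have h1' : AtLeast n {b | evalPath pI E a b ∧ eval3 cI pI φ I' b = TV.t} := by
        refine atLeast_mono ?_ h1
        rintro b ⟨hb1, hb2⟩
        refine ⟨hb1, ?_⟩
        rcases ih b with hu | he
        · rw [hb2] at hu; cases hu
        · rw [← he, hb2]
      simp [h1, h1', pprec_refl]
    · by_cases h2 : AtLeast n {b | evalPath pI E a b ∧ eval3 cI pI φ I b ≠ TV.f}
      · simp [h1, h2, TV.pprec]
      · have hsub : {b | evalPath pI E a b ∧ eval3 cI pI φ I' b ≠ TV.f} ⊆
            {b | evalPath pI E a b ∧ eval3 cI pI φ I b ≠ TV.f} := by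
          rintro b ⟨hb1, hb2⟩
          refine ⟨hb1, fun hf => ?_⟩
          rcases ih b with hu | he
          · rw [hf] at hu; cases hu
          · rw [hf] at he; exact hb2 he.symm
        have h2' : ¬ AtLeast n {b | evalPath pI E a b ∧ eval3 cI pI φ I' b ≠ TV.f} :=
          fun hc => h2 (atLeast_mono hsub hc)
        have h1' : ¬ AtLeast n {b | evalPath pI E a b ∧ eval3 cI pI φ I' b = TV.t} := by
          refine fun hc => h2' (atLeast_mono ?_ hc)
          rintro b ⟨hb1, hb2⟩
          exact ⟨hb1, by rw [hb2]; simp⟩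
        simp [h1, h2, h1', h2', pprec_refl]
  | eq E₁ E₂ => intro a; exact pprec_refl _
  | disj E₁ E₂ => intro a; exact pprec_refl _
  | closed Q => intro a; exact pprec_refl _

open Classical in
lemma eval3_exact (cI : N → Δ) (pI : P → Δ → Δ → Prop) (φ : Shape N P S)
    (σ : S → Set Δ) :
    ∀ a : Δ, eval3 cI pI φ (exactTV σ) a
      = if a ∈ eval2 cI pI φ σ then TV.t else TV.f := by
  induction φ with
  | top => intro a; simp [eval3, eval2]
  | name s => intro a; simp [eval3, eval2, exactTV]; congr
  | singleton c => intro a; simp [eval3, eval2]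
  | and φ ψ ihφ ihψ =>
    intro a
    by_cases h1 : a ∈ eval2 cI pI φ σ <;> by_cases h2 : a ∈ eval2 cI pI ψ σ <;>
      simp [eval3, eval2, ihφ, ihψ, h1, h2, TV.conj, TV.rank]
  | neg φ ih =>
    intro a
    by_cases h : a ∈ eval2 cI pI φ σ <;> simp [eval3, eval2, ih, h, TV.neg]
  | geq n E φ ih =>
    intro a
    have hset : {b | evalPath pI E a b ∧ eval3 cI pI φ (exactTV σ) b = TV.t}
        = {b | evalPath pI E a b ∧ b ∈ eval2 cI pI φ σ} := by
      ext b
      by_cases hb : b ∈ eval2 cI pI φ σ <;> simp [ih b, hb]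
    have hset' : {b | evalPath pI E a b ∧ eval3 cI pI φ (exactTV σ) b ≠ TV.f}
        = {b | evalPath pI E a b ∧ b ∈ eval2 cI pI φ σ} := by
      ext b
      by_cases hb : b ∈ eval2 cI pI φ σ <;> simp [ih b, hb]
    simp only [eval3, hset, hset']
    by_cases h : AtLeast n {b | evalPath pI E a b ∧ b ∈ eval2 cI pI φ σ} <;>
      simp [h, eval2, Set.mem_setOf_eq]
  | eq E₁ E₂ => intro a; simp [eval3, eval2]; congr
  | disj E₁ E₂ => intro a; simp [eval3, eval2]
  | closed Q => intro a; simp [eval3, eval2]; congr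

/-- `Ψ_D` is a consistent approximator of `T_D`: it is `≤_p`-monotone and
coincides with `T_D` on exact interpretations. -/
theorem stmt_16 (cI : N → Δ) (pI : P → Δ → Δ → Prop) (D : S → Shape N P S) :
    (∀ I I' : S → Δ → TV, (∀ s a, (I s a).pprec (I' s a)) →
      ∀ s a, ((PsiD cI pI D I) s a).pprec ((PsiD cI pI D I') s a)) ∧
    (∀ σ : S → Set Δ, PsiD cI pI D (exactTV σ) = exactTV (TD cI pI D σ)) := by
  constructor
  · intro I I' h s a
    exact eval3_mono cI pI (D s) I I' h a
  · intro σ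
    funext s a
    rw [PsiD, eval3_exact]
    rfl
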